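/- Suppose D is binary with propensity score p(X) = ℙ(D=1|X), δ ≤ p(X) ≤ 1−δ a.s., and unconfoundedness holds: (Y(1), Y(0)) ⫫ D | X, with Y = DY(1) + (1−D)Y(0) and E[|Y(d)|] < ∞ for d ∈ {0,1}. Then E[D·Y/p(X)] = E[Y(1)] and E[(1−D)·Y/(1−p(X))] = E[Y(0)]; consequently E[(D/p(X) − (1−D)/(1−p(X)))·Y] = E[Y(1) − Y(0)]. -/

import Mathlib

open MeasureTheory ProbabilityTheory Filter

section Aux

variable {Ω : Type*}

lemma ipw_step {m : MeasurableSpace Ω} {mΩ : MeasurableSpace Ω} (μ : Measure Ω)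
    [IsProbabilityMeasure μ] (hm : m ≤ mΩ)
    {r : Ω → ℝ} (hr : StronglyMeasurable[m] r) {C : ℝ} (hrC : ∀ᵐ ω ∂μ, ‖r ω‖ ≤ C)
    {h : Ω → ℝ} (hh : Integrable h μ) :
    ∫ ω, r ω * h ω ∂μ = ∫ ω, r ω * (μ[h | m]) ω ∂μ := by
  have hmul := condExp_stronglyMeasurable_mul_of_bound hm hr hh C hrC
  calc ∫ ω, r ω * h ω ∂μ = ∫ ω, (μ[(fun ω => r ω * h ω) | m]) ω ∂μ :=
        (integral_condExp hm).symm
    _ = ∫ ω, r ω * (μ[h | m]) ω ∂μ := by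
        refine integral_congr_ae ?_
        filter_upwards [hmul] with ω hω
        exact hω

lemma ipw_cont {mY : MeasurableSpace Ω} {mΩ : MeasurableSpace Ω} (μ : Measure Ω)
    [IsProbabilityMeasure μ] (hmY : mY ≤ mΩ)
    {r : Ω → ℝ} (hr : AEStronglyMeasurable r μ) {C : ℝ} (hC : 0 ≤ C)
    (hrC : ∀ᵐ ω ∂μ, ‖r ω‖ ≤ C) :
    Continuous fun f : Lp ℝ 1 (μ.trim hmY) => ∫ ω, r ω * f ω ∂μ := by
  refine (LipschitzWith.of_dist_le_mul (K := C.toNNReal) fun f1 f2 => ?_).continuous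
  have hint : ∀ f : Lp ℝ 1 (μ.trim hmY), Integrable (fun ω => r ω * f ω) μ := fun f =>
    (integrable_of_integrable_trim hmY (L1.integrable_coeFn f)).bdd_mul hr hrC
  have hif : ∀ f : Lp ℝ 1 (μ.trim hmY), Integrable (⇑f) μ := fun f =>
    integrable_of_integrable_trim hmY (L1.integrable_coeFn f)
  have hsm : StronglyMeasurable[mY] fun ω => ‖f1 ω - f2 ω‖ :=
    ((Lp.stronglyMeasurable f1).sub (Lp.stronglyMeasurable f2)).norm
  have hdist : dist f1 f2 = ∫ ω, ‖f1 ω - f2 ω‖ ∂μ := by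
    rw [dist_eq_norm, L1.norm_eq_integral_norm, integral_trim hmY hsm]
    refine integral_congr_ae ?_
    filter_upwards [Lp.coeFn_sub f1 f2] with ω hω
    rw [hω, Pi.sub_apply]
  rw [Real.dist_eq, ← integral_sub (hint f1) (hint f2)]
  have hbd : |∫ ω, (r ω * f1 ω - r ω * f2 ω) ∂μ| ≤ ∫ ω, C * ‖f1 ω - f2 ω‖ ∂μ := by
    refine le_trans (by simpa [Real.norm_eq_abs] using
      norm_integral_le_integral_norm (fun ω => r ω * f1 ω - r ω * f2 ω) (μ := μ)) ?_
    refine integral_mono_ae ((hint f1).sub (hint f2)).norm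
      ((((hif f1).sub (hif f2)).norm).const_mul C) ?_
    filter_upwards [hrC] with ω hω
    have : |r ω * f1 ω - r ω * f2 ω| = |r ω| * |f1 ω - f2 ω| := by
      rw [← abs_mul]; ring_nf
    rw [Real.norm_eq_abs, this]
    exact mul_le_mul_of_nonneg_right (by simpa [Real.norm_eq_abs] using hω) (abs_nonneg _)
  calc |∫ ω, (r ω * f1 ω - r ω * f2 ω) ∂μ| ≤ ∫ ω, C * ‖f1 ω - f2 ω‖ ∂μ := hbd
    _ = C * dist f1 f2 := by rw [hdist, integral_const_mul]
    _ ≤ C.toNNReal * dist f1 f2 := by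
        rw [Real.coe_toNNReal C hC]

/-- Key IPW lemma: if `A` is conditionally independent (given `m`) of every `mY`-measurable set,
then for bounded `m`-measurable `g` and `mY`-measurable integrable `f`,
`∫ (g ⋅ 1_A) f = ∫ (g ⋅ E[1_A|m]) f`. -/
lemma ipw_key {m mY : MeasurableSpace Ω} {mΩ : MeasurableSpace Ω} (μ : Measure Ω)
    [IsProbabilityMeasure μ] (hm : m ≤ mΩ) (hmY : mY ≤ mΩ)
    {A : Set Ω} (hA : MeasurableSet[mΩ] A)
    (hAB : ∀ B : Set Ω, MeasurableSet[mY] B →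
      (μ[(B ∩ A).indicator (fun _ => (1:ℝ)) | m]) =ᵐ[μ]
        fun ω => (μ[B.indicator (fun _ => (1:ℝ)) | m]) ω *
          (μ[A.indicator (fun _ => (1:ℝ)) | m]) ω)
    {g : Ω → ℝ} (hg : StronglyMeasurable[m] g) {C : ℝ} (hgC : ∀ ω, ‖g ω‖ ≤ C)
    {f : Ω → ℝ} (hf : Integrable f (μ.trim hmY)) :
    ∫ ω, (g ω * A.indicator (fun _ => (1:ℝ)) ω) * f ω ∂μ
      = ∫ ω, (g ω * (μ[A.indicator (fun _ => (1:ℝ)) | m]) ω) * f ω ∂μ := by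
  set cA := μ[A.indicator (fun _ => (1:ℝ)) | m] with hcAdef
  have hne : Nonempty Ω := by
    by_contra h
    have h0 : μ Set.univ = 0 := by
      rw [Set.univ_eq_empty_iff.mpr (not_nonempty_iff.mp h)]; exact measure_empty
    simp [measure_univ] at h0
  have hC0 : 0 ≤ C := le_trans (norm_nonneg _) (hgC (Classical.arbitrary _))
  have hcAsm : StronglyMeasurable[m] cA := stronglyMeasurable_condExp
  have hindint : Integrable (A.indicator (fun _ => (1:ℝ))) μ := (integrable_const (μ := μ) (1:ℝ)).indicator hA
  have hcA0 : 0 ≤ᵐ[μ] cA := condExp_nonneg (Eventually.of_forall fun ω =>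
    Set.indicator_nonneg (fun _ _ => zero_le_one) ω)
  have hcA1 : cA ≤ᵐ[μ] fun _ => (1:ℝ) := by
    have h1 := condExp_mono (m := m) (μ := μ) hindint (integrable_const (1:ℝ))
      (Eventually.of_forall fun ω => by
        by_cases hω : ω ∈ A <;> simp [Set.indicator_apply, hω])
    rwa [condExp_const hm] at h1
  have hcAb : ∀ᵐ ω ∂μ, ‖cA ω‖ ≤ 1 := by
    filter_upwards [hcA0, hcA1] with ω h0 h1
    rw [Real.norm_eq_abs, abs_le]
    have h0' : (0:ℝ) ≤ cA ω := by simpa using h0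
    exact ⟨by linarith, h1⟩
  have hgcAb : ∀ᵐ ω ∂μ, ‖g ω * cA ω‖ ≤ C := by
    filter_upwards [hcAb] with ω hω
    calc ‖g ω * cA ω‖ = ‖g ω‖ * ‖cA ω‖ := norm_mul _ _
      _ ≤ C * 1 := mul_le_mul (hgC ω) hω (norm_nonneg _) hC0
      _ = C := mul_one C
  have hgA : AEStronglyMeasurable (fun ω => g ω * A.indicator (fun _ => (1:ℝ)) ω) μ :=
    ((hg.mono hm).mul (stronglyMeasurable_const.indicator hA)).aestronglyMeasurable
  have hgAb : ∀ᵐ ω ∂μ, ‖g ω * A.indicator (fun _ => (1:ℝ)) ω‖ ≤ C := by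
    refine Eventually.of_forall fun ω => ?_
    by_cases hω : ω ∈ A
    · simpa [Set.indicator_apply, hω] using hgC ω
    · simpa [Set.indicator_apply, hω] using hC0
  have hgcA : AEStronglyMeasurable (fun ω => g ω * cA ω) μ :=
    ((hg.mul hcAsm).mono hm).aestronglyMeasurable
  have hP_ind : ∀ (c : ℝ) ⦃s : Set Ω⦄, MeasurableSet[mY] s → (μ.trim hmY) s < ⊤ →
      ∫ ω, (g ω * A.indicator (fun _ => (1:ℝ)) ω) * (s.indicator (fun _ => c)) ω ∂μ
        = ∫ ω, (g ω * cA ω) * (s.indicator (fun _ => c)) ω ∂μ := by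
    intro c s hs hμs
    have hsΩ : MeasurableSet[mΩ] s := hmY s hs
    have hintsA : Integrable ((s ∩ A).indicator fun _ => (1:ℝ)) μ :=
      (integrable_const (μ := μ) (1:ℝ)).indicator (hsΩ.inter hA)
    have hints : Integrable (s.indicator fun _ => (1:ℝ)) μ :=
      (integrable_const (μ := μ) (1:ℝ)).indicator hsΩ
    have e1 : ∀ ω, (g ω * A.indicator (fun _ => (1:ℝ)) ω) * s.indicator (fun _ => c) ω
        = c * (g ω * (s ∩ A).indicator (fun _ => (1:ℝ)) ω) := by
      intro ω
      by_cases h1 : ω ∈ s <;> by_cases h2 : ω ∈ A <;>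
        simp [Set.indicator_apply, h1, h2, Set.mem_inter_iff] <;> ring
    have e2 : ∀ ω, (g ω * cA ω) * s.indicator (fun _ => c) ω
        = c * ((g ω * cA ω) * s.indicator (fun _ => (1:ℝ)) ω) := by
      intro ω
      by_cases h1 : ω ∈ s <;> simp [Set.indicator_apply, h1] <;> ring
    simp_rw [e1, e2]
    rw [integral_const_mul, integral_const_mul]
    congr 1
    calc ∫ ω, g ω * (s ∩ A).indicator (fun _ => (1:ℝ)) ω ∂μ
        = ∫ ω, g ω * (μ[(s ∩ A).indicator (fun _ => (1:ℝ)) | m]) ω ∂μ :=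
          ipw_step μ hm hg (Eventually.of_forall hgC) hintsA
      _ = ∫ ω, (g ω * cA ω) * (μ[s.indicator (fun _ => (1:ℝ)) | m]) ω ∂μ := by
          refine integral_congr_ae ?_
          filter_upwards [hAB s hs] with ω hω
          rw [hω]; ring
      _ = ∫ ω, (g ω * cA ω) * s.indicator (fun _ => (1:ℝ)) ω ∂μ :=
          (ipw_step μ hm (hg.mul hcAsm) hgcAb hints).symm
  have hP_add : ∀ ⦃f1 f2 : Ω → ℝ⦄, Disjoint (Function.support f1) (Function.support f2) →
      Integrable f1 (μ.trim hmY) → Integrable f2 (μ.trim hmY) →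
      (∫ ω, (g ω * A.indicator (fun _ => (1:ℝ)) ω) * f1 ω ∂μ
        = ∫ ω, (g ω * cA ω) * f1 ω ∂μ) →
      (∫ ω, (g ω * A.indicator (fun _ => (1:ℝ)) ω) * f2 ω ∂μ
        = ∫ ω, (g ω * cA ω) * f2 ω ∂μ) →
      ∫ ω, (g ω * A.indicator (fun _ => (1:ℝ)) ω) * (f1 + f2) ω ∂μ
        = ∫ ω, (g ω * cA ω) * (f1 + f2) ω ∂μ := by
    intro f1 f2 hd h1 h2 hP1 hP2
    have i1 : Integrable f1 μ := integrable_of_integrable_trim hmY h1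
    have i2 : Integrable f2 μ := integrable_of_integrable_trim hmY h2
    simp only [Pi.add_apply]
    simp_rw [mul_add]
    rw [integral_add (i1.bdd_mul hgA hgAb) (i2.bdd_mul hgA hgAb),
      integral_add (i1.bdd_mul hgcA hgcAb) (i2.bdd_mul hgcA hgcAb), hP1, hP2]
  have hP_closed : IsClosed {f : Lp ℝ 1 (μ.trim hmY) |
      ∫ ω, (g ω * A.indicator (fun _ => (1:ℝ)) ω) * f ω ∂μ
        = ∫ ω, (g ω * cA ω) * f ω ∂μ} :=
    isClosed_eq (ipw_cont μ hmY hgA hC0 hgAb) (ipw_cont μ hmY hgcA hC0 hgcAb)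
  have hP_ae : ∀ ⦃f1 f2 : Ω → ℝ⦄, f1 =ᵐ[μ.trim hmY] f2 → Integrable f1 (μ.trim hmY) →
      (∫ ω, (g ω * A.indicator (fun _ => (1:ℝ)) ω) * f1 ω ∂μ
        = ∫ ω, (g ω * cA ω) * f1 ω ∂μ) →
      ∫ ω, (g ω * A.indicator (fun _ => (1:ℝ)) ω) * f2 ω ∂μ
        = ∫ ω, (g ω * cA ω) * f2 ω ∂μ := by
    intro f1 f2 hfe hint h1
    have hμe : f1 =ᵐ[μ] f2 := ae_eq_of_ae_eq_trim hfe
    calc ∫ ω, (g ω * A.indicator (fun _ => (1:ℝ)) ω) * f2 ω ∂μ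
        = ∫ ω, (g ω * A.indicator (fun _ => (1:ℝ)) ω) * f1 ω ∂μ :=
          integral_congr_ae (by filter_upwards [hμe] with ω hω; rw [hω])
      _ = ∫ ω, (g ω * cA ω) * f1 ω ∂μ := h1
      _ = ∫ ω, (g ω * cA ω) * f2 ω ∂μ :=
          integral_congr_ae (by filter_upwards [hμe] with ω hω; rw [hω])
  letI : MeasurableSpace Ω := mY
  exact Integrable.induction (μ := μ.trim hmY)
    (P := fun f => ∫ ω, (g ω * A.indicator (fun _ => (1:ℝ)) ω) * f ω ∂μ
      = ∫ ω, (g ω * cA ω) * f ω ∂μ) hP_ind hP_add hP_closed hP_ae hf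

end Aux

/-- IPW identification of the average treatment effect under unconfoundedness:
`E[DY/p(X)] = E[Y(1)]`, `E[(1−D)Y/(1−p(X))] = E[Y(0)]`, and hence
`E[(D/p(X) − (1−D)/(1−p(X)))Y] = E[Y(1) − Y(0)]`. -/
theorem statement12 {Ω : Type*} [MeasurableSpace Ω] [StandardBorelSpace Ω]
    (μ : Measure Ω) [IsProbabilityMeasure μ]
    {k : ℕ} (D Y0 Y1 Y : Ω → ℝ) (X : Ω → Fin k → ℝ) (p : (Fin k → ℝ) → ℝ) (δ : ℝ)
    (hD : Measurable D) (hY0 : Measurable Y0) (hY1 : Measurable Y1)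
    (hX : Measurable X) (hp : Measurable p)
    (hDval : ∀ ω, D ω = 0 ∨ D ω = 1)
    (hδ : 0 < δ) (hpb : ∀ᵐ ω ∂μ, δ ≤ p (X ω) ∧ p (X ω) ≤ 1 - δ)
    (hpcond : μ[D | MeasurableSpace.comap X inferInstance] =ᵐ[μ] fun ω => p (X ω))
    (hunconf : CondIndepFun (MeasurableSpace.comap X inferInstance) hX.comap_le
      (fun ω => (Y1 ω, Y0 ω)) D μ)
    (hY1int : Integrable Y1 μ) (hY0int : Integrable Y0 μ)
    (hY : ∀ ω, Y ω = D ω * Y1 ω + (1 - D ω) * Y0 ω) :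
    (∫ ω, D ω * Y ω / p (X ω) ∂μ = ∫ ω, Y1 ω ∂μ) ∧
    (∫ ω, (1 - D ω) * Y ω / (1 - p (X ω)) ∂μ = ∫ ω, Y0 ω ∂μ) ∧
    (∫ ω, (D ω / p (X ω) - (1 - D ω) / (1 - p (X ω))) * Y ω ∂μ
      = ∫ ω, (Y1 ω - Y0 ω) ∂μ) := by
  classical
  have hmle : MeasurableSpace.comap X inferInstance ≤ _ := hX.comap_le
  have hpairm : Measurable (fun ω => (Y1 ω, Y0 ω)) := hY1.prodMk hY0
  have hmYle : MeasurableSpace.comap (fun ω => (Y1 ω, Y0 ω)) inferInstance ≤ _ :=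
    hpairm.comap_le
  have hδ2 : δ ≤ 1 - δ := by
    have hne : (MeasureTheory.ae μ).NeBot := ae_neBot.mpr (IsProbabilityMeasure.ne_zero μ)
    obtain ⟨ω, hω⟩ := hpb.exists
    linarith [hω.1, hω.2]
  -- truncated propensity score
  set q : (Fin k → ℝ) → ℝ := fun x => max δ (min (p x) (1 - δ)) with hqdef
  have hqm : Measurable q := measurable_const.max (hp.min measurable_const)
  have hqδ : ∀ x, δ ≤ q x := fun x => le_max_left _ _
  have hqub : ∀ x, q x ≤ 1 - δ := fun x => max_le hδ2 (min_le_right _ _)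
  have hq0 : ∀ x, 0 < q x := fun x => lt_of_lt_of_le hδ (hqδ x)
  have hq1 : ∀ x, 0 < 1 - q x := fun x => lt_of_lt_of_le hδ (by linarith [hqub x])
  have hqp : ∀ᵐ ω ∂μ, q (X ω) = p (X ω) := by
    filter_upwards [hpb] with ω hω
    rw [hqdef]
    simp only
    rw [min_eq_left hω.2, max_eq_right hω.1]
  -- D and 1 - D as indicators
  have hA1 : MeasurableSet (D ⁻¹' {1}) := hD (measurableSet_singleton 1)
  have hA0 : MeasurableSet (D ⁻¹' {0}) := hD (measurableSet_singleton 0)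
  have hDind : ∀ ω, D ω = (D ⁻¹' {1}).indicator (fun _ => (1:ℝ)) ω := by
    intro ω; rcases hDval ω with h | h <;>
      simp [Set.indicator_apply, Set.mem_preimage, h]
  have hD1ind : ∀ ω, 1 - D ω = (D ⁻¹' {0}).indicator (fun _ => (1:ℝ)) ω := by
    intro ω; rcases hDval ω with h | h <;>
      simp [Set.indicator_apply, Set.mem_preimage, h]
  have hDint : Integrable D μ := by
    refine Integrable.mono' (integrable_const 1) hD.aestronglyMeasurable
      (Eventually.of_forall fun ω => ?_)
    rcases hDval ω with h | h <;> simp [h]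
  -- conditional expectations of the indicators
  have hcA1 : (μ[(D ⁻¹' {1}).indicator (fun _ => (1:ℝ)) | MeasurableSpace.comap X inferInstance])
      =ᵐ[μ] fun ω => p (X ω) := by
    have h1 : (D ⁻¹' {1}).indicator (fun _ => (1:ℝ)) = D := funext fun ω => (hDind ω).symm
    rw [h1]; exact hpcond
  have hcA0 : (μ[(D ⁻¹' {0}).indicator (fun _ => (1:ℝ)) | MeasurableSpace.comap X inferInstance])
      =ᵐ[μ] fun ω => 1 - p (X ω) := by
    have h1 : (D ⁻¹' {0}).indicator (fun _ => (1:ℝ)) = (fun _ => (1:ℝ)) - D :=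
      funext fun ω => by rw [Pi.sub_apply]; exact (hD1ind ω).symm
    rw [h1]
    have h2 := condExp_sub (m := MeasurableSpace.comap X inferInstance) (μ := μ)
      (integrable_const (1:ℝ)) hDint
    rw [condExp_const hmle] at h2
    filter_upwards [h2, hpcond] with ω e2 ep
    rw [e2, Pi.sub_apply, ep]
  -- conditional independence in indicator form
  have hCI := (condIndepFun_iff_condExp_inter_preimage_eq_mul hpairm hD).mp hunconf
  have hAB1 : ∀ B : Set Ω,
      MeasurableSet[MeasurableSpace.comap (fun ω => (Y1 ω, Y0 ω)) inferInstance] B →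
      (μ[(B ∩ D ⁻¹' {1}).indicator (fun _ => (1:ℝ)) | MeasurableSpace.comap X inferInstance])
        =ᵐ[μ] fun ω =>
          (μ[B.indicator (fun _ => (1:ℝ)) | MeasurableSpace.comap X inferInstance]) ω *
          (μ[(D ⁻¹' {1}).indicator (fun _ => (1:ℝ)) | MeasurableSpace.comap X inferInstance]) ω := by
    rintro B ⟨s, hs, rfl⟩
    exact hCI s {1} hs (measurableSet_singleton 1)
  have hAB0 : ∀ B : Set Ω,
      MeasurableSet[MeasurableSpace.comap (fun ω => (Y1 ω, Y0 ω)) inferInstance] B →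
      (μ[(B ∩ D ⁻¹' {0}).indicator (fun _ => (1:ℝ)) | MeasurableSpace.comap X inferInstance])
        =ᵐ[μ] fun ω =>
          (μ[B.indicator (fun _ => (1:ℝ)) | MeasurableSpace.comap X inferInstance]) ω *
          (μ[(D ⁻¹' {0}).indicator (fun _ => (1:ℝ)) | MeasurableSpace.comap X inferInstance]) ω := by
    rintro B ⟨s, hs, rfl⟩
    exact hCI s {0} hs (measurableSet_singleton 0)
  -- measurability of Y1, Y0 w.r.t. the comap σ-algebra, and trim-integrability
  have hpairmY : Measurable[MeasurableSpace.comap (fun ω => (Y1 ω, Y0 ω)) inferInstance]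
      (fun ω => (Y1 ω, Y0 ω)) := Measurable.of_comap_le le_rfl
  have hY1mY : StronglyMeasurable[MeasurableSpace.comap (fun ω => (Y1 ω, Y0 ω)) inferInstance]
      Y1 := (measurable_fst.comp hpairmY).stronglyMeasurable
  have hY0mY : StronglyMeasurable[MeasurableSpace.comap (fun ω => (Y1 ω, Y0 ω)) inferInstance]
      Y0 := (measurable_snd.comp hpairmY).stronglyMeasurable
  have hY1trim : Integrable Y1 (μ.trim hmYle) := hY1int.trim hmYle hY1mY
  have hY0trim : Integrable Y0 (μ.trim hmYle) := hY0int.trim hmYle hY0mY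
  -- the bounded m-measurable weights
  have hXm : Measurable[MeasurableSpace.comap X inferInstance] X := Measurable.of_comap_le le_rfl
  have hg1m : StronglyMeasurable[MeasurableSpace.comap X inferInstance]
      (fun ω => (q (X ω))⁻¹) := ((hqm.comp hXm).inv).stronglyMeasurable
  have hg2m : StronglyMeasurable[MeasurableSpace.comap X inferInstance]
      (fun ω => (1 - q (X ω))⁻¹) :=
    ((measurable_const.sub (hqm.comp hXm)).inv).stronglyMeasurable
  have hg1b : ∀ ω, ‖(q (X ω))⁻¹‖ ≤ δ⁻¹ := fun ω => by
    rw [Real.norm_eq_abs, abs_of_pos (inv_pos.mpr (hq0 _))]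
    gcongr
    exact hqδ _
  have hg2b : ∀ ω, ‖(1 - q (X ω))⁻¹‖ ≤ δ⁻¹ := fun ω => by
    rw [Real.norm_eq_abs, abs_of_pos (inv_pos.mpr (hq1 _))]
    gcongr
    linarith [hqub (X ω)]
  -- the two key identities
  have E1 := ipw_key μ hmle hmYle hA1 hAB1 hg1m hg1b hY1trim
  have E2 := ipw_key μ hmle hmYle hA0 hAB0 hg2m hg2b hY0trim
  -- pointwise identifications of the integrands
  have heq1 : (fun ω => D ω * Y ω / p (X ω)) =ᵐ[μ]
      fun ω => ((q (X ω))⁻¹ * (D ⁻¹' {1}).indicator (fun _ => (1:ℝ)) ω) * Y1 ω := by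
    filter_upwards [hqp] with ω hω
    rcases hDval ω with h | h
    · have hnm : ω ∉ D ⁻¹' {1} := by simp [Set.mem_preimage, h]
      simp [h, Set.indicator_of_notMem hnm]
    · have hmem : ω ∈ D ⁻¹' {1} := by simp [Set.mem_preimage, h]
      rw [hY ω, h, ← hω, Set.indicator_of_mem hmem]
      field_simp
      ring
  have heq2 : (fun ω => (1 - D ω) * Y ω / (1 - p (X ω))) =ᵐ[μ]
      fun ω => ((1 - q (X ω))⁻¹ * (D ⁻¹' {0}).indicator (fun _ => (1:ℝ)) ω) * Y0 ω := by
    filter_upwards [hqp] with ω hω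
    rcases hDval ω with h | h
    · have hmem : ω ∈ D ⁻¹' {0} := by simp [Set.mem_preimage, h]
      rw [hY ω, h, ← hω, Set.indicator_of_mem hmem]
      have h1q : 1 - q (X ω) ≠ 0 := ne_of_gt (hq1 _)
      field_simp
      ring
    · have hnm : ω ∉ D ⁻¹' {0} := by simp [Set.mem_preimage, h]
      simp [h, Set.indicator_of_notMem hnm]
  -- first claim
  have claim1 : ∫ ω, D ω * Y ω / p (X ω) ∂μ = ∫ ω, Y1 ω ∂μ := by
    rw [integral_congr_ae heq1, E1]
    refine integral_congr_ae ?_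
    filter_upwards [hcA1, hqp] with ω h1 h2
    rw [h1, ← h2, inv_mul_cancel₀ (ne_of_gt (hq0 _)), one_mul]
  have claim2 : ∫ ω, (1 - D ω) * Y ω / (1 - p (X ω)) ∂μ = ∫ ω, Y0 ω ∂μ := by
    rw [integral_congr_ae heq2, E2]
    refine integral_congr_ae ?_
    filter_upwards [hcA0, hqp] with ω h1 h2
    rw [h1, ← h2, inv_mul_cancel₀ (ne_of_gt (hq1 _)), one_mul]
  -- integrability of the two IPW integrands
  have hI1 : Integrable (fun ω => D ω * Y ω / p (X ω)) μ := by
    refine Integrable.congr ?_ heq1.symm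
    refine hY1int.bdd_mul (c := δ⁻¹) ?_ (Eventually.of_forall fun ω => ?_)
    · exact ((hg1m.mono hmle).mul (stronglyMeasurable_const.indicator hA1)).aestronglyMeasurable
    · by_cases hω : ω ∈ D ⁻¹' {1}
      · simpa [Set.indicator_of_mem hω] using hg1b ω
      · simp only [Set.indicator_of_notMem hω, mul_zero, norm_zero]
        positivity
  have hI2 : Integrable (fun ω => (1 - D ω) * Y ω / (1 - p (X ω))) μ := by
    refine Integrable.congr ?_ heq2.symm
    refine hY0int.bdd_mul (c := δ⁻¹) ?_ (Eventually.of_forall fun ω => ?_)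
    · exact ((hg2m.mono hmle).mul (stronglyMeasurable_const.indicator hA0)).aestronglyMeasurable
    · by_cases hω : ω ∈ D ⁻¹' {0}
      · simpa [Set.indicator_of_mem hω] using hg2b ω
      · simp only [Set.indicator_of_notMem hω, mul_zero, norm_zero]
        positivity
  refine ⟨claim1, claim2, ?_⟩
  have e3 : ∀ ω, (D ω / p (X ω) - (1 - D ω) / (1 - p (X ω))) * Y ω
      = D ω * Y ω / p (X ω) - (1 - D ω) * Y ω / (1 - p (X ω)) := fun ω => by ring
  calc ∫ ω, (D ω / p (X ω) - (1 - D ω) / (1 - p (X ω))) * Y ω ∂μ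
      = ∫ ω, (D ω * Y ω / p (X ω) - (1 - D ω) * Y ω / (1 - p (X ω))) ∂μ :=
        integral_congr_ae (Eventually.of_forall fun ω => e3 ω)
    _ = (∫ ω, D ω * Y ω / p (X ω) ∂μ) - ∫ ω, (1 - D ω) * Y ω / (1 - p (X ω)) ∂μ :=
        integral_sub hI1 hI2
    _ = (∫ ω, Y1 ω ∂μ) - ∫ ω, Y0 ω ∂μ := by rw [claim1, claim2]
    _ = ∫ ω, (Y1 ω - Y0 ω) ∂μ := (integral_sub hY1int hY0int).symm
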